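/- Let m₁, m₂, m₃ ≥ 2 be integers, and let Γ = ⟨σ₁, σ₂, σ₃ | σ₁^{m₁} = σ₂^{m₂} = σ₃^{m₃} = σ₁σ₂σ₃ = 1⟩ be the corresponding triangle (von Dyck–type) group. Then Γ admits a finite quotient group G in which the images of σ₁, σ₂, σ₃ have orders exactly m₁, m₂, m₃ respectively. -/

import Mathlib

open Matrix

namespace Stmt5Aux

variable {F : Type} [Field F]

lemma fin2_eq_iff {a b c d a' b' c' d' : F} :
    !![a, b; c, d] = !![a', b'; c', d'] ↔ a = a' ∧ b = b' ∧ c = c' ∧ d = d' := by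
  constructor
  · intro h
    have e : ∀ i j, !![a, b; c, d] i j = !![a', b'; c', d'] i j := fun i j => by rw [h]
    refine ⟨?_, ?_, ?_, ?_⟩
    · simpa using e 0 0
    · simpa using e 0 1
    · simpa using e 1 0
    · simpa using e 1 1
  · rintro ⟨rfl, rfl, rfl, rfl⟩; rfl

lemma diag_pow (a b : F) (k : ℕ) :
    (!![a, 0; 0, b]) ^ k = !![a ^ k, 0; 0, b ^ k] := by
  induction k with
  | zero => simp [Matrix.one_fin_two]
  | succ n ih =>
      rw [pow_succ, ih, Matrix.mul_fin_two]
      exact fin2_eq_iff.mpr ⟨by ring, by ring, by ring, by ring⟩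

lemma conj_pow (M C D : Matrix (Fin 2) (Fin 2) F)
    (h : M * C = C * D) (k : ℕ) : M ^ k * C = C * D ^ k := by
  induction k with
  | zero => simp
  | succ n ih =>
      calc M ^ (n + 1) * C = M ^ n * (M * C) := by rw [pow_succ, mul_assoc]
      _ = M ^ n * C * D := by rw [h, ← mul_assoc]
      _ = C * D ^ n * D := by rw [ih]
      _ = C * D ^ (n + 1) := by rw [mul_assoc, ← pow_succ]

lemma smul_one_fin_two (ε : F) :
    ε • (1 : Matrix (Fin 2) (Fin 2) F) = !![ε, 0; 0, ε] := by
  ext i j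
  fin_cases i <;> fin_cases j <;> simp [Matrix.one_fin_two]

lemma pow_eq_smul_one_iff (M C : Matrix (Fin 2) (Fin 2) F) (a b : F)
    (hC : IsUnit C.det) (h : M * C = C * !![a, 0; 0, b]) (k : ℕ) (ε : F) :
    M ^ k = ε • (1 : Matrix (Fin 2) (Fin 2) F) ↔ a ^ k = ε ∧ b ^ k = ε := by
  have hk := conj_pow M C _ h k
  rw [diag_pow] at hk
  constructor
  · intro hM
    have h1 : C⁻¹ * (M ^ k * C) = !![a ^ k, 0; 0, b ^ k] := by
      rw [hk, ← mul_assoc, Matrix.nonsing_inv_mul C hC, one_mul]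
    rw [hM, Matrix.smul_mul, one_mul, Matrix.mul_smul,
      Matrix.nonsing_inv_mul C hC, smul_one_fin_two] at h1
    obtain ⟨e1, -, -, e4⟩ := fin2_eq_iff.mp h1.symm
    exact ⟨e1, e4⟩
  · rintro ⟨h1, h2⟩
    rw [h1, h2] at hk
    have h3 : M ^ k * C = (ε • (1 : Matrix (Fin 2) (Fin 2) F)) * C := by
      rw [hk, ← smul_one_fin_two ε, Matrix.mul_smul, Matrix.smul_mul, mul_one, one_mul]
    calc M ^ k = M ^ k * C * C⁻¹ := by
          rw [mul_assoc, Matrix.mul_nonsing_inv C hC, mul_one]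
    _ = ε • (1 : Matrix (Fin 2) (Fin 2) F) * C * C⁻¹ := by rw [h3]
    _ = ε • (1 : Matrix (Fin 2) (Fin 2) F) := by
          rw [mul_assoc, Matrix.mul_nonsing_inv C hC, mul_one]

lemma mat_order_iff (g : F) (m : ℕ)
    (hord : ∀ k : ℕ, (g ^ k = 1 ∨ g ^ k = -1) ↔ m ∣ k)
    (M C : Matrix (Fin 2) (Fin 2) F) (hC : IsUnit C.det)
    (h : M * C = C * !![g, 0; 0, g⁻¹]) (k : ℕ) :
    (M ^ k = 1 ∨ M ^ k = -1) ↔ m ∣ k := by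
  have i1 := pow_eq_smul_one_iff M C g g⁻¹ hC h k (1 : F)
  have i2 := pow_eq_smul_one_iff M C g g⁻¹ hC h k (-1 : F)
  rw [one_smul] at i1
  rw [neg_smul, one_smul] at i2
  rw [i1, i2, ← hord k]
  constructor
  · rintro (⟨h1, -⟩ | ⟨h1, -⟩)
    exacts [Or.inl h1, Or.inr h1]
  · rintro (h1 | h1)
    · exact Or.inl ⟨h1, by rw [inv_pow, h1, inv_one]⟩
    · exact Or.inr ⟨h1, by rw [inv_pow, h1, inv_neg, inv_one]⟩

lemma units_order_iff (γ : Fˣ) (m : ℕ) (hγ : orderOf γ = 2 * m) (k : ℕ) :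
    ((γ : F) ^ k = 1 ∨ (γ : F) ^ k = -1) ↔ m ∣ k := by
  have h0 : ((γ : F) ^ k = 1 ∨ (γ : F) ^ k = -1) ↔ (γ : F) ^ k * (γ : F) ^ k = 1 :=
    mul_self_eq_one_iff.symm
  rw [h0, ← pow_add, ← two_mul, ← Units.val_pow_eq_pow_val, Units.val_eq_one,
    ← orderOf_dvd_iff_pow_eq_one, hγ]
  exact Nat.mul_dvd_mul_iff_left (by norm_num)

lemma units_sq_ne_one (γ : Fˣ) (m : ℕ) (hm : 2 ≤ m) (hγ : orderOf γ = 2 * m) :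
    (γ : F) ^ 2 ≠ 1 := by
  intro h
  have h2 : γ ^ 2 = 1 := Units.val_eq_one.mp (by rw [Units.val_pow_eq_pow_val]; exact h)
  have h3 : orderOf γ ∣ 2 := orderOf_dvd_of_pow_eq_one h2
  rw [hγ] at h3
  have := Nat.le_of_dvd (by norm_num) h3
  omega

lemma sub_inv_ne_zero {a : F} (ha : a ≠ 0) (ha2 : a ^ 2 ≠ 1) : a - a⁻¹ ≠ 0 := by
  intro h
  apply ha2
  have : a = a⁻¹ := sub_eq_zero.mp h
  calc a ^ 2 = a * a := sq a
  _ = a * a⁻¹ := by rw [← this]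
  _ = 1 := mul_inv_cancel₀ ha

lemma exists_unit_of_order (G : Type) [Group G] [Finite G] [IsCyclic G] {d : ℕ}
    (hd : d ∣ Nat.card G) : ∃ x : G, orderOf x = d := by
  obtain ⟨g, hg⟩ := IsCyclic.exists_ofOrder_eq_natCard (α := G)
  refine ⟨g ^ (Nat.card G / d), ?_⟩
  rw [orderOf_pow, hg, Nat.gcd_eq_right (Nat.div_dvd_of_dvd hd),
    Nat.div_div_self hd Nat.card_pos.ne']

end Stmt5Aux

open Stmt5Aux in
/-- The triangle group `⟨σ₁,σ₂,σ₃ ∣ σᵢ^{mᵢ} = σ₁σ₂σ₃ = 1⟩` has a finite quotient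
in which the images of the generators have orders exactly `m₁, m₂, m₃`. -/
theorem stmt_5 (m₁ m₂ m₃ : ℕ) (h1 : 2 ≤ m₁) (h2 : 2 ≤ m₂) (h3 : 2 ≤ m₃)
    (rels : Set (FreeGroup (Fin 3)))
    (hrels : rels = {FreeGroup.of 0 ^ m₁, FreeGroup.of 1 ^ m₂, FreeGroup.of 2 ^ m₃,
      FreeGroup.of 0 * FreeGroup.of 1 * FreeGroup.of 2}) :
    ∃ (G : Type) (_ : Group G) (_ : Finite G) (φ : PresentedGroup rels →* G),
      Function.Surjective φ ∧
      orderOf (φ (PresentedGroup.of 0)) = m₁ ∧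
      orderOf (φ (PresentedGroup.of 1)) = m₂ ∧
      orderOf (φ (PresentedGroup.of 2)) = m₃ := by
  -- Choose a finite field whose multiplicative group has order divisible by 2·m₁·m₂·m₃.
  set M : ℕ := 2 * (m₁ * (m₂ * m₃)) with hM
  have hM0 : 0 < M := by
    have : 0 < m₁ * (m₂ * m₃) := Nat.mul_pos (by omega) (Nat.mul_pos (by omega) (by omega))
    omega
  obtain ⟨p, hpM, hp⟩ := Nat.exists_infinite_primes (M + 1)
  have hco : Nat.Coprime p M := by
    refine (Nat.Prime.coprime_iff_not_dvd hp).mpr fun hdvd => ?_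
    have := Nat.le_of_dvd hM0 hdvd
    omega
  haveI : NeZero M := ⟨hM0.ne'⟩
  set u : (ZMod M)ˣ := ZMod.unitOfCoprime p hco with hu
  set k : ℕ := orderOf u with hk
  have hk0 : k ≠ 0 := (orderOf_pos u).ne'
  have hdvd : M ∣ p ^ k - 1 := by
    have h1' : ((p : ZMod M)) ^ k = 1 := by
      have := pow_orderOf_eq_one u
      have h2' : ((u ^ k : (ZMod M)ˣ) : ZMod M) = 1 := by rw [this]; rfl
      rwa [Units.val_pow_eq_pow_val, ZMod.coe_unitOfCoprime] at h2'
    have h3' : ((p ^ k : ℕ) : ZMod M) = ((1 : ℕ) : ZMod M) := by push_cast; rw [h1']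
    have h4' : p ^ k ≡ 1 [MOD M] := (ZMod.natCast_eq_natCast_iff _ _ _).mp h3'
    exact (Nat.modEq_iff_dvd' (Nat.one_le_pow _ _ hp.pos)).mp h4'.symm
  haveI : Fact p.Prime := ⟨hp⟩
  set F : Type := GaloisField p k with hF
  have hcardF : Nat.card F = p ^ k := GaloisField.card p k hk0
  have hcardU : Nat.card Fˣ = p ^ k - 1 := by rw [Nat.card_units, hcardF]
  -- units of prescribed orders
  have hdvd1 : 2 * m₁ ∣ Nat.card Fˣ := by
    rw [hcardU]; exact dvd_trans ⟨m₂ * m₃, by rw [hM]; ring⟩ hdvd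
  have hdvd2 : 2 * m₂ ∣ Nat.card Fˣ := by
    rw [hcardU]; exact dvd_trans ⟨m₁ * m₃, by rw [hM]; ring⟩ hdvd
  have hdvd3 : 2 * m₃ ∣ Nat.card Fˣ := by
    rw [hcardU]; exact dvd_trans ⟨m₁ * m₂, by rw [hM]; ring⟩ hdvd
  obtain ⟨α, hα⟩ := exists_unit_of_order Fˣ hdvd1
  obtain ⟨β, hβ⟩ := exists_unit_of_order Fˣ hdvd2
  obtain ⟨ζ, hζ⟩ := exists_unit_of_order Fˣ hdvd3
  set a : F := (α : F) with ha_def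
  set b : F := (β : F) with hb_def
  set z : F := (ζ : F) with hz_def
  have ha0 : a ≠ 0 := Units.ne_zero α
  have hb0 : b ≠ 0 := Units.ne_zero β
  have hz0 : z ≠ 0 := Units.ne_zero ζ
  have ha2 : a ^ 2 ≠ 1 := units_sq_ne_one α m₁ h1 hα
  have hb2 : b ^ 2 ≠ 1 := units_sq_ne_one β m₂ h2 hβ
  have hz2 : z ^ 2 ≠ 1 := units_sq_ne_one ζ m₃ h3 hζ
  have hasub : a - a⁻¹ ≠ 0 := sub_inv_ne_zero ha0 ha2
  have hbsub : b - b⁻¹ ≠ 0 := sub_inv_ne_zero hb0 hb2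
  have hzsub : z - z⁻¹ ≠ 0 := sub_inv_ne_zero hz0 hz2
  -- the matrices
  set Amat : Matrix (Fin 2) (Fin 2) F := !![a + a⁻¹, -1; 1, 0] with hAmat
  set Bmat : Matrix (Fin 2) (Fin 2) F := !![0, z; -z⁻¹, b + b⁻¹] with hBmat
  set ABmat : Matrix (Fin 2) (Fin 2) F :=
    !![z⁻¹, (a + a⁻¹) * z - (b + b⁻¹); 0, z] with hABmat
  have hmulAB : Amat * Bmat = ABmat := by
    rw [hAmat, hBmat, hABmat, Matrix.mul_fin_two]
    refine fin2_eq_iff.mpr ⟨?_, ?_, ?_, ?_⟩ <;> ring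
  -- diagonalizations
  have hconjA : Amat * !![a, a⁻¹; 1, 1] = !![a, a⁻¹; 1, 1] * !![a, 0; 0, a⁻¹] := by
    rw [hAmat, Matrix.mul_fin_two, Matrix.mul_fin_two]
    refine fin2_eq_iff.mpr ⟨?_, ?_, ?_, ?_⟩
    · linear_combination mul_inv_cancel₀ ha0
    · linear_combination mul_inv_cancel₀ ha0
    · ring
    · ring
  have hdetA : IsUnit (!![a, a⁻¹; 1, 1] : Matrix (Fin 2) (Fin 2) F).det := by
    rw [Matrix.det_fin_two_of]
    refine isUnit_iff_ne_zero.mpr ?_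
    simpa using hasub
  have hconjB : Bmat * !![z * b⁻¹, z * b; 1, 1]
      = !![z * b⁻¹, z * b; 1, 1] * !![b, 0; 0, b⁻¹] := by
    rw [hBmat, Matrix.mul_fin_two, Matrix.mul_fin_two]
    refine fin2_eq_iff.mpr ⟨?_, ?_, ?_, ?_⟩
    · linear_combination (-z) * mul_inv_cancel₀ hb0
    · linear_combination (-z) * mul_inv_cancel₀ hb0
    · linear_combination (-(b⁻¹ : F)) * inv_mul_cancel₀ hz0
    · linear_combination (-(b : F)) * inv_mul_cancel₀ hz0
  have hdetB : IsUnit (!![z * b⁻¹, z * b; 1, 1] : Matrix (Fin 2) (Fin 2) F).det := by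
    rw [Matrix.det_fin_two_of]
    refine isUnit_iff_ne_zero.mpr fun h => ?_
    have h' : z * (b⁻¹ - b) = 0 := by linear_combination h
    rcases mul_eq_zero.mp h' with h'' | h''
    · exact hz0 h''
    · apply hbsub
      have hb' : b⁻¹ = b := sub_eq_zero.mp h''
      rw [sub_eq_zero]
      exact hb'.symm
  have hconjAB : ABmat * !![1, ((a + a⁻¹) * z - (b + b⁻¹)) / (z - z⁻¹); 0, 1]
      = !![1, ((a + a⁻¹) * z - (b + b⁻¹)) / (z - z⁻¹); 0, 1] * !![z⁻¹, 0; 0, (z⁻¹)⁻¹] := by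
    rw [hABmat, Matrix.mul_fin_two, Matrix.mul_fin_two, inv_inv]
    have hv : ((a + a⁻¹) * z - (b + b⁻¹)) / (z - z⁻¹) * (z - z⁻¹)
        = (a + a⁻¹) * z - (b + b⁻¹) := div_mul_cancel₀ _ hzsub
    refine fin2_eq_iff.mpr ⟨?_, ?_, ?_, ?_⟩
    · ring
    · linear_combination -hv
    · ring
    · ring
  have hdetAB : IsUnit (!![1, ((a + a⁻¹) * z - (b + b⁻¹)) / (z - z⁻¹); 0, 1]
      : Matrix (Fin 2) (Fin 2) F).det := by
    rw [Matrix.det_fin_two_of]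
    simp
  -- order iffs at the matrix level
  have matA : ∀ k' : ℕ, (Amat ^ k' = 1 ∨ Amat ^ k' = -1) ↔ m₁ ∣ k' :=
    mat_order_iff a m₁ (units_order_iff α m₁ hα) Amat _ hdetA hconjA
  have matB : ∀ k' : ℕ, (Bmat ^ k' = 1 ∨ Bmat ^ k' = -1) ↔ m₂ ∣ k' :=
    mat_order_iff b m₂ (units_order_iff β m₂ hβ) Bmat _ hdetB hconjB
  have hordzinv : ∀ k' : ℕ, ((z⁻¹ : F) ^ k' = 1 ∨ (z⁻¹ : F) ^ k' = -1) ↔ m₃ ∣ k' := by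
    intro k'
    have := units_order_iff ζ⁻¹ m₃ (by rw [orderOf_inv, hζ]) k'
    rwa [Units.val_inv_eq_inv_val] at this
  have matAB : ∀ k' : ℕ, (ABmat ^ k' = 1 ∨ ABmat ^ k' = -1) ↔ m₃ ∣ k' :=
    mat_order_iff z⁻¹ m₃ hordzinv ABmat _ hdetAB hconjAB
  -- special linear group and the quotient by ±1
  set SL2 : Type := Matrix.SpecialLinearGroup (Fin 2) F with hSL2
  have detAmat : Amat.det = 1 := by rw [hAmat, Matrix.det_fin_two_of]; ring
  have detBmat : Bmat.det = 1 := by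
    rw [hBmat, Matrix.det_fin_two_of]; linear_combination mul_inv_cancel₀ hz0
  set sA : SL2 := ⟨Amat, detAmat⟩ with hsA
  set sB : SL2 := ⟨Bmat, detBmat⟩ with hsB
  set wmat : Matrix (Fin 2) (Fin 2) F := !![-1, 0; 0, -1] with hwmat
  have detw : wmat.det = 1 := by rw [hwmat, Matrix.det_fin_two_of]; ring
  set w : SL2 := ⟨wmat, detw⟩ with hw
  have wmat_eq : wmat = -(1 : Matrix (Fin 2) (Fin 2) F) := by
    rw [hwmat]
    ext i j
    fin_cases i <;> fin_cases j <;> simp [Matrix.one_fin_two]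
  have hww : w * w = 1 := by
    apply Subtype.ext
    show wmat * wmat = (1 : SL2).1
    rw [hwmat, Matrix.mul_fin_two, Matrix.SpecialLinearGroup.coe_one, Matrix.one_fin_two]
    exact fin2_eq_iff.mpr ⟨by ring, by ring, by ring, by ring⟩
  have hcomm : ∀ g : SL2, Commute w g := by
    intro g
    apply Subtype.ext
    show wmat * (g : Matrix (Fin 2) (Fin 2) F) = (g : Matrix (Fin 2) (Fin 2) F) * wmat
    rw [wmat_eq]
    simp
  set H : Subgroup SL2 := Subgroup.zpowers w with hH
  haveI hnormal : H.Normal := by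
    constructor
    intro n hn g
    obtain ⟨zz, rfl⟩ := Subgroup.mem_zpowers_iff.mp hn
    have hc : w ^ zz * g = g * w ^ zz := (hcomm g).zpow_left zz
    have : g * w ^ zz * g⁻¹ = w ^ zz := by
      rw [← hc, mul_assoc, _root_.mul_inv_cancel, mul_one]
    rw [this]
    exact Subgroup.zpow_mem _ (Subgroup.mem_zpowers w) zz
  have memH_iff : ∀ s : SL2, s ∈ H ↔ s = 1 ∨ s = w := by
    intro s
    constructor
    · intro hs
      obtain ⟨zz, rfl⟩ := Subgroup.mem_zpowers_iff.mp hs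
      have hw2 : w ^ (2 : ℤ) = 1 := by
        rw [show (2 : ℤ) = ((2 : ℕ) : ℤ) by norm_num, zpow_natCast, pow_two]
        exact hww
      have hsplit : w ^ zz = w ^ (zz % 2) := by
        conv_lhs => rw [← Int.emod_add_mul_ediv zz 2]
        rw [_root_.zpow_add, _root_.zpow_mul, hw2, _root_.one_zpow, mul_one]
      rcases Int.emod_two_eq_zero_or_one zz with he | he
      · left; rw [hsplit, he, zpow_zero]
      · right; rw [hsplit, he, zpow_one]
    · rintro (rfl | rfl)
      · exact one_mem H
      · exact Subgroup.mem_zpowers w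
  set G₀ : Type := SL2 ⧸ H with hG₀
  haveI : Finite SL2 := Subtype.finite
  haveI : Finite G₀ := Quotient.finite _
  set π : SL2 →* G₀ := QuotientGroup.mk' H with hπ
  -- transfer order iffs to the quotient
  have quotOrd : ∀ (s : SL2) (m : ℕ),
      (∀ k' : ℕ, ((s : Matrix (Fin 2) (Fin 2) F) ^ k' = 1
        ∨ (s : Matrix (Fin 2) (Fin 2) F) ^ k' = -1) ↔ m ∣ k') →
      (∀ k' : ℕ, (π s) ^ k' = 1 ↔ m ∣ k') := by
    intro s m hs k'
    rw [← _root_.map_pow, hπ, QuotientGroup.mk'_apply, QuotientGroup.eq_one_iff, memH_iff]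
    rw [← hs k']
    constructor
    · rintro (h' | h')
      · left
        have := congrArg (Subtype.val) h'
        rwa [Matrix.SpecialLinearGroup.coe_pow, Matrix.SpecialLinearGroup.coe_one] at this
      · right
        have := congrArg (Subtype.val) h'
        rw [Matrix.SpecialLinearGroup.coe_pow] at this
        rw [this]
        exact wmat_eq
    · rintro (h' | h')
      · left
        apply Subtype.ext
        rwa [Matrix.SpecialLinearGroup.coe_pow, Matrix.SpecialLinearGroup.coe_one]
      · right
        apply Subtype.ext
        rw [Matrix.SpecialLinearGroup.coe_pow]
        rw [h', ← wmat_eq]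
  have ordIff_of_iff : ∀ (t : G₀) (m : ℕ), (∀ k' : ℕ, t ^ k' = 1 ↔ m ∣ k') →
      orderOf t = m := by
    intro t m ht
    exact Nat.dvd_antisymm (orderOf_dvd_of_pow_eq_one ((ht m).mpr dvd_rfl))
      ((ht _).mp (pow_orderOf_eq_one t))
  have coe_sAB : ((sA * sB : SL2) : Matrix (Fin 2) (Fin 2) F) = ABmat := by
    rw [Matrix.SpecialLinearGroup.coe_mul]
    show Amat * Bmat = ABmat
    exact hmulAB
  have qA : ∀ k' : ℕ, (π sA) ^ k' = 1 ↔ m₁ ∣ k' := quotOrd sA m₁ matA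
  have qB : ∀ k' : ℕ, (π sB) ^ k' = 1 ↔ m₂ ∣ k' := quotOrd sB m₂ matB
  have qAB : ∀ k' : ℕ, (π (sA * sB)) ^ k' = 1 ↔ m₃ ∣ k' :=
    quotOrd (sA * sB) m₃ (by rw [coe_sAB]; exact matAB)
  -- the homomorphism from the presented group
  set tA : G₀ := π sA with htA
  set tB : G₀ := π sB with htB
  set tC : G₀ := (tA * tB)⁻¹ with htC
  have htAB : tA * tB = π (sA * sB) := by rw [htA, htB, _root_.map_mul]
  set f : Fin 3 → G₀ := ![tA, tB, tC] with hf
  have hf0 : f 0 = tA := rfl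
  have hf1 : f 1 = tB := rfl
  have hf2 : f 2 = tC := rfl
  subst hrels
  have hrelhold : ∀ r ∈ ({FreeGroup.of 0 ^ m₁, FreeGroup.of 1 ^ m₂, FreeGroup.of 2 ^ m₃,
      FreeGroup.of 0 * FreeGroup.of 1 * FreeGroup.of 2} : Set (FreeGroup (Fin 3))),
      FreeGroup.lift f r = 1 := by
    intro r hr
    simp only [Set.mem_insert_iff, Set.mem_singleton_iff] at hr
    rcases hr with rfl | rfl | rfl | rfl
    · rw [_root_.map_pow, FreeGroup.lift_apply_of, hf0]
      exact (qA m₁).mpr dvd_rfl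
    · rw [_root_.map_pow, FreeGroup.lift_apply_of, hf1]
      exact (qB m₂).mpr dvd_rfl
    · rw [_root_.map_pow, FreeGroup.lift_apply_of, hf2, htC, htAB]
      rw [inv_pow, inv_eq_one]
      exact (qAB m₃).mpr dvd_rfl
    · rw [_root_.map_mul, _root_.map_mul, FreeGroup.lift_apply_of, FreeGroup.lift_apply_of, FreeGroup.lift_apply_of,
        hf0, hf1, hf2, htC]
      exact _root_.mul_inv_cancel (tA * tB)
  set ψ : PresentedGroup _ →* G₀ := PresentedGroup.toGroup hrelhold with hψ
  refine ⟨ψ.range, inferInstance, inferInstance, ψ.rangeRestrict,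
    ψ.rangeRestrict_surjective, ?_, ?_, ?_⟩ <;>
  · rw [show ∀ g, orderOf (ψ.rangeRestrict g) = orderOf (ψ g) from fun g => by
      rw [← orderOf_injective ψ.range.subtype ψ.range.subtype_injective (ψ.rangeRestrict g)]
      exact congrArg orderOf (ψ.coe_rangeRestrict g)]
    rw [hψ, PresentedGroup.toGroup.of]
    first
      | (rw [hf0]; exact ordIff_of_iff tA m₁ qA)
      | (rw [hf1]; exact ordIff_of_iff tB m₂ qB)
      | (rw [hf2, htC, orderOf_inv, htAB]; exact ordIff_of_iff _ m₃ qAB)
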